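/- Let k ≥ 2 be an integer and let ξ = (p_1, …, p_{2k−1}) be a polygonal curve in ℝ^d with 2k − 1 vertices. Let δ = (1/2) · min{ dist(p_j, [p_{j−1}, p_{j+1}]) : j even, 2 ≤ j ≤ 2k−2 }, where [a,b] denotes the closed line segment from a to b. Then there exists a polygonal curve ζ in ℝ^d with |ζ| ≤ 2k − 2 and d_F(ξ, ζ) ≤ δ. -/

import Mathlib

/-- The piecewise-linear map of the polygonal curve with vertices `v 0, …, v (m-1)`,
uniformly parameterized over `[0,1]`. -/
noncomputable def polyMap {E : Type*} [NormedAddCommGroup E] [NormedSpace ℝ E]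
    (m : ℕ) (v : ℕ → E) (t : ℝ) : E :=
  let u : ℝ := t * ((m - 1 : ℕ) : ℝ)
  let j : ℕ := min (Int.toNat ⌊u⌋) (m - 1)
  v j + (u - (j : ℝ)) • (v (min (j + 1) (m - 1)) - v j)

/-- The Fréchet distance between two curves `f g : ℝ → E` (regarded as parameterized
over `[0,1]`): the infimum of the bounds `r` achievable by pairs of continuous
nondecreasing surjective reparameterizations of `[0,1]`. -/
noncomputable def frechetDist {E : Type*} [PseudoMetricSpace E] (f g : ℝ → E) : ℝ :=
  sInf {r : ℝ | ∃ φ ψ : ℝ → ℝ,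
      ContinuousOn φ (Set.Icc 0 1) ∧ MonotoneOn φ (Set.Icc 0 1) ∧
      Set.MapsTo φ (Set.Icc 0 1) (Set.Icc 0 1) ∧ Set.SurjOn φ (Set.Icc 0 1) (Set.Icc 0 1) ∧
      ContinuousOn ψ (Set.Icc 0 1) ∧ MonotoneOn ψ (Set.Icc 0 1) ∧
      Set.MapsTo ψ (Set.Icc 0 1) (Set.Icc 0 1) ∧ Set.SurjOn ψ (Set.Icc 0 1) (Set.Icc 0 1) ∧
      ∀ t ∈ Set.Icc (0:ℝ) 1, dist (f (φ t)) (g (ψ t)) ≤ r}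

/-! ### Auxiliary lemmas -/

def myClamp (x : ℝ) : ℝ := min (max x 0) 1

lemma myClamp_of_nonpos {x : ℝ} (h : x ≤ 0) : myClamp x = 0 := by
  rw [myClamp, max_eq_right h, min_eq_left zero_le_one]

lemma myClamp_of_one_le {x : ℝ} (h : 1 ≤ x) : myClamp x = 1 := by
  rw [myClamp, max_eq_left (le_trans zero_le_one h), min_eq_right h]

lemma myClamp_of_mem {x : ℝ} (h0 : 0 ≤ x) (h1 : x ≤ 1) : myClamp x = x := by
  rw [myClamp, max_eq_left h0, min_eq_left h1]

lemma myClamp_mono {x y : ℝ} (h : x ≤ y) : myClamp x ≤ myClamp y := by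
  simp only [myClamp]; gcongr

lemma myClamp_sub_le {x y : ℝ} (h : x ≤ y) : myClamp y - myClamp x ≤ y - x := by
  rcases le_total x 0 with h1|h1 <;> rcases le_total y 0 with h2|h2 <;>
    rcases le_total x 1 with h3|h3 <;> rcases le_total y 1 with h4|h4 <;>
    simp [myClamp, min_def, max_def] <;> split_ifs <;> linarith

lemma continuous_myClamp : Continuous myClamp := by
  unfold myClamp; continuity

section Aux
variable {E : Type*} [NormedAddCommGroup E] [NormedSpace ℝ E]

lemma polyMap_eval (m : ℕ) (v : ℕ → E) (i : ℕ) (θ : ℝ) (h : i + 1 ≤ m - 1)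
    (h0 : 0 ≤ θ) (h1 : θ ≤ 1) :
    polyMap m v (((i : ℝ) + θ) / ((m - 1 : ℕ) : ℝ)) = v i + θ • (v (i+1) - v i) := by
  have hm1 : 0 < m - 1 := by omega
  have hmr : ((m - 1 : ℕ) : ℝ) ≠ 0 := by positivity
  have hu : ((i : ℝ) + θ) / ((m-1:ℕ):ℝ) * ((m-1:ℕ):ℝ) = (i:ℝ) + θ := div_mul_cancel₀ _ hmr
  simp only [polyMap, hu]
  rcases lt_or_eq_of_le h1 with h1' | h1'
  · have hfl : ⌊(i:ℝ) + θ⌋ = i := by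
      rw [add_comm, Int.floor_add_natCast, Int.floor_eq_zero_iff.2 ⟨h0, h1'⟩, zero_add]
    rw [hfl]
    have hti : Int.toNat (i : ℤ) = i := Int.toNat_natCast i
    rw [hti, min_eq_left (by omega), min_eq_left (by omega)]
    congr 1
    ring_nf
  · subst h1'
    have hfl : ⌊(i:ℝ) + 1⌋ = (i : ℤ) + 1 := by
      rw [Int.floor_add_one, Int.floor_natCast]
    rw [hfl]
    have hti : Int.toNat ((i : ℤ) + 1) = i + 1 := by omega
    rw [hti, min_eq_left (by omega)]
    push_cast
    rw [one_smul]
    abel_nf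
    ring_nf
    simp

lemma comb_dist_le {x y x' y' : E} {θ r : ℝ} (h0 : 0 ≤ θ) (h1 : θ ≤ 1)
    (hx : ‖x - x'‖ ≤ r) (hy : ‖y - y'‖ ≤ r) :
    dist (x + θ • (y - x)) (x' + θ • (y' - x')) ≤ r := by
  rw [dist_eq_norm]
  have he : (x + θ • (y - x)) - (x' + θ • (y' - x')) = (1-θ) • (x - x') + θ • (y - y') := by
    module
  rw [he]
  calc ‖(1-θ) • (x - x') + θ • (y - y')‖ ≤ ‖(1-θ) • (x-x')‖ + ‖θ • (y-y')‖ := norm_add_le _ _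
    _ = (1-θ)*‖x-x'‖ + θ*‖y-y'‖ := by
        rw [norm_smul, norm_smul, Real.norm_of_nonneg (by linarith), Real.norm_of_nonneg h0]
    _ ≤ (1-θ)*r + θ*r := by
        have := norm_nonneg (x - x'); have := norm_nonneg (y - y'); nlinarith
    _ = r := by ring

end Aux

set_option maxHeartbeats 4000000 in
theorem stmt15 (d k : ℕ) (hk : 2 ≤ k)
    (p : ℕ → EuclideanSpace ℝ (Fin d)) :  -- vertices p 1, …, p (2k-1) of ξ
    ∃ (s : ℕ) (ζ : ℕ → EuclideanSpace ℝ (Fin d)),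
      1 ≤ s ∧ s ≤ 2 * k - 2 ∧
      frechetDist (polyMap (2 * k - 1) (fun i => p (i + 1))) (polyMap s ζ) ≤
        (1 / 2 : ℝ) * sInf {r : ℝ | ∃ j, 2 ≤ j ∧ j ≤ 2 * k - 2 ∧ Even j ∧
          r = Metric.infDist (p j) (segment ℝ (p (j - 1)) (p (j + 1)))} := by
  classical
  set S : Set ℝ := {r : ℝ | ∃ j, 2 ≤ j ∧ j ≤ 2 * k - 2 ∧ Even j ∧
      r = Metric.infDist (p j) (segment ℝ (p (j - 1)) (p (j + 1)))} with hSdef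
  have hSne : S.Nonempty := ⟨_, 2, le_refl 2, by omega, even_two, rfl⟩
  have hSfin : S.Finite := by
    have hsub : S ⊆ (fun j => Metric.infDist (p j) (segment ℝ (p (j-1)) (p (j+1)))) ''
        (Set.Iic (2*k-2)) := by
      rintro r ⟨j, h1, h2, h3, rfl⟩; exact ⟨j, h2, rfl⟩
    exact ((Set.finite_Iic _).image _).subset hsub
  obtain ⟨j₀, hj2, hjM, _, hjval⟩ := hSne.csInf_mem hSfin
  clear_value S
  obtain ⟨q, rfl⟩ : ∃ q, j₀ = q + 2 := ⟨j₀ - 2, by omega⟩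
  set w : ℕ → EuclideanSpace ℝ (Fin d) := fun i => p (i+1) with hw
  set N : ℕ := 2*k - 3 with hN
  have hqN : q + 1 ≤ N := by omega
  have hNr : (0:ℝ) < (N:ℝ) := by
    have h1 : 1 ≤ N := by omega
    exact_mod_cast Nat.lt_of_lt_of_le Nat.zero_lt_one h1
  -- the closest point on the segment
  have hcomp : IsCompact (segment ℝ (w q) (w (q+2))) := by
    rw [segment_eq_image' ℝ _ _]; exact isCompact_Icc.image (by continuity)
  obtain ⟨c, hcmem, hcd⟩ := hcomp.exists_infDist_eq_dist
    ⟨w q, left_mem_segment ℝ _ _⟩ (w (q+1))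
  rw [segment_eq_image' ℝ _ _] at hcmem
  obtain ⟨lam, hlam, hc⟩ := hcmem
  have hc' : w q + lam • (w (q+2) - w q) = c := hc
  have hlam0 : (0:ℝ) ≤ lam := hlam.1
  have hlam1 : lam ≤ 1 := hlam.2
  set v : EuclideanSpace ℝ (Fin d) := (2⁻¹ : ℝ) • (w (q+1) - c) with hv
  set δ : ℝ := (1/2 : ℝ) * sInf S with hδ
  have e1 : p (q+2-1) = w q := rfl
  have e2 : p (q+2+1) = w (q+2) := rfl
  have e3 : p (q+2) = w (q+1) := rfl
  have hδval : δ = (2⁻¹:ℝ) * ‖w (q+1) - c‖ := by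
    rw [hδ, hjval, e1, e2, e3, hcd, dist_eq_norm]
    norm_num
  have hvnorm : ‖v‖ = δ := by
    rw [hv, norm_smul, hδval]
    norm_num
  have hv2 : ‖w (q+1) - (c + v)‖ = δ := by
    have he : w (q+1) - (c + v) = v := by rw [hv]; module
    rw [he, hvnorm]
  have hδ0 : 0 ≤ δ := hvnorm ▸ norm_nonneg v
  clear_value δ
  clear hδ hδval hjval
  -- the simplified curve
  set ζ : ℕ → EuclideanSpace ℝ (Fin d) := fun i => if i < q then w i else if i = q then w q + v
      else if i = q+1 then w (q+2) + v else w (i+1) with hζ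
  have hzq : ζ q = w q + v := by
    simp only [hζ]; rw [if_neg (by omega)]; simp
  have hzq1 : ζ (q+1) = w (q+2) + v := by
    simp only [hζ]; rw [if_neg (by omega), if_neg (by omega)]; simp
  refine ⟨N+1, ζ, by omega, by omega, ?_⟩
  have h2k1 : 2*k - 1 = N + 2 := by omega
  rw [h2k1]
  clear_value v ζ w N
  clear hv hw hN
  -- the reparameterization
  set ψ : ℝ → ℝ := fun t => (t * ((N:ℝ)+1) - (1-lam) * myClamp (t*((N:ℝ)+1) - (q:ℝ))
      - lam * myClamp (t*((N:ℝ)+1) - ((q:ℝ)+1))) / (N:ℝ) with hψ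
  clear_value ψ
  have hψcont : Continuous ψ := by
    rw [hψ]
    exact (((continuous_id.mul continuous_const).sub
      (continuous_const.mul (continuous_myClamp.comp
        ((continuous_id.mul continuous_const).sub continuous_const)))).sub
      (continuous_const.mul (continuous_myClamp.comp
        ((continuous_id.mul continuous_const).sub continuous_const)))).div_const _
  have hψmono : Monotone ψ := by
    intro a b hab
    simp only [hψ]
    have hNr' : (0:ℝ) < (N:ℝ) := hNr
    have hMr : (0:ℝ) ≤ (N:ℝ)+1 := by positivity
    have hab' : a * ((N:ℝ)+1) ≤ b * ((N:ℝ)+1) := by nlinarith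
    have m1 : myClamp (a*((N:ℝ)+1) - (q:ℝ)) ≤ myClamp (b*((N:ℝ)+1) - (q:ℝ)) :=
      myClamp_mono (by linarith)
    have m2 : myClamp (a*((N:ℝ)+1) - ((q:ℝ)+1)) ≤ myClamp (b*((N:ℝ)+1) - ((q:ℝ)+1)) :=
      myClamp_mono (by linarith)
    have l1 : myClamp (b*((N:ℝ)+1) - (q:ℝ)) - myClamp (a*((N:ℝ)+1) - (q:ℝ))
        ≤ (b*((N:ℝ)+1) - (q:ℝ)) - (a*((N:ℝ)+1) - (q:ℝ)) := myClamp_sub_le (by linarith)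
    have l2 : myClamp (b*((N:ℝ)+1) - ((q:ℝ)+1)) - myClamp (a*((N:ℝ)+1) - ((q:ℝ)+1))
        ≤ (b*((N:ℝ)+1) - ((q:ℝ)+1)) - (a*((N:ℝ)+1) - ((q:ℝ)+1)) := myClamp_sub_le (by linarith)
    apply (div_le_div_iff_of_pos_right hNr').mpr
    have d1 : (1-lam) * (myClamp (b*((N:ℝ)+1) - (q:ℝ)) - myClamp (a*((N:ℝ)+1) - (q:ℝ)))
        ≤ (1-lam) * ((b-a)*((N:ℝ)+1)) :=
      mul_le_mul_of_nonneg_left (by linarith) (by linarith)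
    have d2 : lam * (myClamp (b*((N:ℝ)+1) - ((q:ℝ)+1)) - myClamp (a*((N:ℝ)+1) - ((q:ℝ)+1)))
        ≤ lam * ((b-a)*((N:ℝ)+1)) :=
      mul_le_mul_of_nonneg_left (by linarith) hlam0
    linarith [d1, d2]
  have hψ0 : ψ 0 = 0 := by
    have hq0 : (0:ℝ) ≤ (q:ℝ) := Nat.cast_nonneg q
    simp only [hψ]
    rw [myClamp_of_nonpos (by nlinarith), myClamp_of_nonpos (by nlinarith)]
    ring_nf
  have hψ1 : ψ 1 = 1 := by
    have hqN' : (q:ℝ) + 1 ≤ (N:ℝ) := by exact_mod_cast hqN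
    simp only [hψ]
    rw [myClamp_of_one_le (by nlinarith), myClamp_of_one_le (by nlinarith)]
    field_simp
    ring
  have hψmaps : Set.MapsTo ψ (Set.Icc 0 1) (Set.Icc 0 1) := by
    intro x hx
    simp only [Set.mem_Icc] at hx ⊢
    exact ⟨by rw [← hψ0]; exact hψmono hx.1, by rw [← hψ1]; exact hψmono hx.2⟩
  have hψsurj : Set.SurjOn ψ (Set.Icc 0 1) (Set.Icc 0 1) := by
    intro x hx
    have hiv := intermediate_value_Icc zero_le_one hψcont.continuousOn
    rw [hψ0, hψ1] at hiv
    exact hiv hx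
  -- main distance bound
  have hmain : ∀ t ∈ Set.Icc (0:ℝ) 1,
      dist (polyMap (N+2) w t) (polyMap (N+1) ζ (ψ t)) ≤ δ := by
    intro t ht
    obtain ⟨ht0, ht1⟩ := ht
    set u : ℝ := t * ((N:ℝ)+1) with hu
    clear_value u
    have hu0 : 0 ≤ u := by rw [hu]; exact mul_nonneg ht0 (by positivity)
    have huN : u ≤ (N:ℝ)+1 := by
      rw [hu]; nlinarith
    have hfl0 : 0 ≤ ⌊u⌋ := Int.floor_nonneg.2 hu0
    set i : ℕ := min (⌊u⌋.toNat) N with hidef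
    clear_value i
    have hiN : i ≤ N := by rw [hidef]; exact min_le_right _ _
    have hile : (i:ℝ) ≤ u := by
      rcases le_total (⌊u⌋.toNat) N with hle | hle
      · rw [hidef, min_eq_left hle]
        have h1 : ((⌊u⌋.toNat : ℤ) : ℝ) ≤ u := by
          rw [Int.toNat_of_nonneg hfl0]; exact Int.floor_le u
        exact_mod_cast h1
      · rw [hidef, min_eq_right hle]
        have h1 : (N:ℤ) ≤ ⌊u⌋ := by omega
        calc ((N:ℕ):ℝ) ≤ ((⌊u⌋:ℤ):ℝ) := by exact_mod_cast h1
          _ ≤ u := Int.floor_le u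
    have hlt1 : u ≤ (i:ℝ) + 1 := by
      rcases le_total (⌊u⌋.toNat) N with hle | hle
      · rw [hidef, min_eq_left hle]
        have h1 : u < ((⌊u⌋.toNat : ℤ):ℝ) + 1 := by
          rw [Int.toNat_of_nonneg hfl0]; exact Int.lt_floor_add_one u
        have h2 := le_of_lt h1
        exact_mod_cast h2
      · rw [hidef, min_eq_right hle]; exact huN
    set θ : ℝ := u - (i:ℝ) with hθdef
    clear_value θ
    have hθ0 : 0 ≤ θ := by rw [hθdef]; linarith
    have hθ1 : θ ≤ 1 := by rw [hθdef]; linarith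
    have ht_eq : ((i:ℝ) + θ) / (((N+2)-1:ℕ):ℝ) = t := by
      have hc1 : ((N+2)-1:ℕ) = N+1 := rfl
      have hc2 : ((N+1:ℕ):ℝ) = (N:ℝ)+1 := by push_cast; ring
      have hc3 : (i:ℝ) + θ = t * ((N:ℝ)+1) := by rw [hθdef, hu]; ring
      rw [hc1, hc2, hc3]
      field_simp
    have hξ : polyMap (N+2) w t = w i + θ • (w (i+1) - w i) := by
      rw [← ht_eq]
      exact polyMap_eval (N+2) w i θ (by omega) hθ0 hθ1
    have hψu : ψ t = (u - (1-lam) * myClamp (u - (q:ℝ))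
        - lam * myClamp (u - ((q:ℝ)+1))) / (N:ℝ) := by
      simp only [hψ, hu]
    have hNN : ((N+1)-1:ℕ) = N := rfl
    rw [hξ]
    rcases lt_or_ge i q with hcase | hcase
    · -- Case A : i < q
      have hiq : (i:ℝ) + 1 ≤ (q:ℝ) := by exact_mod_cast Nat.succ_le_of_lt hcase
      have hc1 : myClamp (u - (q:ℝ)) = 0 := myClamp_of_nonpos (by linarith)
      have hc2 : myClamp (u - ((q:ℝ)+1)) = 0 := myClamp_of_nonpos (by linarith)
      have hψt : ψ t = ((i:ℝ) + θ)/(((N+1)-1:ℕ):ℝ) := by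
        rw [hψu, hc1, hc2, hNN, hθdef]
        ring_nf
      rw [hψt, polyMap_eval (N+1) ζ i θ (by omega) hθ0 hθ1]
      have hzi : ζ i = w i := by
        simp only [hζ]; rw [if_pos hcase]
      apply comb_dist_le hθ0 hθ1
      · rw [hzi, sub_self, norm_zero]; exact hδ0
      · by_cases h' : i + 1 < q
        · have : ζ (i+1) = w (i+1) := by simp only [hζ]; rw [if_pos h']
          rw [this, sub_self, norm_zero]; exact hδ0
        · have hq' : i + 1 = q := by omega
          have hz : ζ (i+1) = w q + v := by rw [hq', hzq]
          rw [hz, hq']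
          have : w q - (w q + v) = -v := by module
          rw [this, norm_neg, hvnorm]
    · by_cases hB : i = q
      · -- Case B : i = q
        have hiq : (i:ℝ) = (q:ℝ) := by exact_mod_cast hB
        have h3 : u - (q:ℝ) = θ := by rw [hθdef, hiq]
        have hc1 : myClamp (u - (q:ℝ)) = θ := by rw [h3]; exact myClamp_of_mem hθ0 hθ1
        have hc2 : myClamp (u - ((q:ℝ)+1)) = 0 := myClamp_of_nonpos (by linarith)
        have hθ'0 : 0 ≤ lam * θ := mul_nonneg hlam0 hθ0
        have hθ'1 : lam * θ ≤ 1 := by nlinarith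
        have hψt : ψ t = ((q:ℝ) + lam * θ)/(((N+1)-1:ℕ):ℝ) := by
          rw [hψu, hc1, hc2, hNN]
          have hnum : u - (1-lam)*θ - lam*0 = (q:ℝ) + lam*θ := by
            have : u = (q:ℝ) + θ := by linarith
            rw [this]; ring
          rw [hnum]
        rw [hψt, polyMap_eval (N+1) ζ q (lam*θ) (by omega) hθ'0 hθ'1, hzq, hzq1, hB]
        have hre : (w q + v) + (lam*θ) • ((w (q+2)+v) - (w q + v))
            = (w q + v) + θ • ((c+v) - (w q + v)) := by
          rw [← hc']; module
        rw [hre]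
        apply comb_dist_le hθ0 hθ1
        · have : w q - (w q + v) = -v := by module
          rw [this, norm_neg, hvnorm]
        · rw [show q + 1 + 1 = q + 2 from rfl] at *
          calc ‖w (q+1) - (c+v)‖ = δ := hv2
            _ ≤ δ := le_refl δ
      · by_cases hC : i = q+1
        · -- Case C : i = q+1
          have hiq : (i:ℝ) = (q:ℝ)+1 := by exact_mod_cast hC
          have h3 : u - ((q:ℝ)+1) = θ := by rw [hθdef, hiq]
          have hc1 : myClamp (u - (q:ℝ)) = 1 := myClamp_of_one_le (by linarith)
          have hc2 : myClamp (u - ((q:ℝ)+1)) = θ := by rw [h3]; exact myClamp_of_mem hθ0 hθ1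
          have hθ'0 : 0 ≤ lam + θ*(1-lam) := by nlinarith
          have hθ'1 : lam + θ*(1-lam) ≤ 1 := by nlinarith
          have hψt : ψ t = ((q:ℝ) + (lam + θ*(1-lam)))/(((N+1)-1:ℕ):ℝ) := by
            rw [hψu, hc1, hc2, hNN]
            have hnum : u - (1-lam)*1 - lam*θ = (q:ℝ) + (lam + θ*(1-lam)) := by
              have : u = (q:ℝ) + 1 + θ := by linarith
              rw [this]; ring
            rw [hnum]
          rw [hψt, polyMap_eval (N+1) ζ q (lam + θ*(1-lam)) (by omega) hθ'0 hθ'1, hzq, hzq1, hC]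
          have hre : (w q + v) + (lam + θ*(1-lam)) • ((w (q+2)+v) - (w q + v))
              = (c+v) + θ • ((w (q+2)+v) - (c+v)) := by
            rw [← hc']; module
          rw [hre, show q + 1 + 1 = q + 2 from rfl]
          apply comb_dist_le hθ0 hθ1
          · rw [hv2]
          · have : w (q+2) - (w (q+2) + v) = -v := by module
            rw [this, norm_neg, hvnorm]
        · -- Case D : q+2 ≤ i
          have hD : q + 2 ≤ i := by omega
          obtain ⟨e, he⟩ : ∃ e, i = q+2+e := ⟨i - (q+2), by omega⟩
          have hiq : (q:ℝ) + 2 ≤ (i:ℝ) := by exact_mod_cast hD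
          have hc1 : myClamp (u - (q:ℝ)) = 1 := myClamp_of_one_le (by linarith)
          have hc2 : myClamp (u - ((q:ℝ)+1)) = 1 := myClamp_of_one_le (by linarith)
          have hψt : ψ t = (((q+1+e:ℕ):ℝ) + θ)/(((N+1)-1:ℕ):ℝ) := by
            rw [hψu, hc1, hc2, hNN]
            have hnum : u - (1-lam)*1 - lam*1 = ((q+1+e:ℕ):ℝ) + θ := by
              have h4 : u = (i:ℝ) + θ := by rw [hθdef]; ring
              have h5 : (i:ℝ) = ((q+1+e:ℕ):ℝ) + 1 := by
                rw [he]; push_cast; ring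
              rw [h4, h5]; ring
            rw [hnum]
          rw [hψt, polyMap_eval (N+1) ζ (q+1+e) θ (by omega) hθ0 hθ1]
          have hz2 : ζ (q+1+e+1) = w (q+1+e+1+1) := by
            simp only [hζ]; rw [if_neg (by omega), if_neg (by omega), if_neg (by omega)]
          have hidx : q+1+e+1 = i := by omega
          have hidx2 : q+1+e+1+1 = i+1 := by omega
          rw [hz2, hidx]
          apply comb_dist_le hθ0 hθ1
          · by_cases he0 : e = 0
            · have hz1 : ζ (q+1+e) = w (q+2) + v := by
                rw [he0, hzq1]
            
              rw [hz1, show i = q + 2 from by omega]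
              have : w (q+2) - (w (q+2) + v) = -v := by module
              rw [this, norm_neg, hvnorm]
            · have hz1 : ζ (q+1+e) = w (q+1+e+1) := by
                simp only [hζ]; rw [if_neg (by omega), if_neg (by omega), if_neg (by omega)]
              rw [hz1, hidx, sub_self, norm_zero]; exact hδ0
          · rw [sub_self, norm_zero]; exact hδ0
  -- conclude
  show frechetDist (polyMap (N+2) w) (polyMap (N+1) ζ) ≤ δ
  unfold frechetDist
  apply csInf_le
  · refine ⟨0, ?_⟩
    rintro r ⟨φ', ψ', _, _, _, _, _, _, _, _, hb⟩
    have h0 := hb 0 ⟨le_refl 0, zero_le_one⟩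
    exact le_trans dist_nonneg h0
  · refine ⟨fun x => x, ψ, continuous_id.continuousOn, fun x _ y _ h => h,
      fun x hx => hx, fun x hx => ⟨x, hx, rfl⟩,
      hψcont.continuousOn, hψmono.monotoneOn _, hψmaps, hψsurj, ?_⟩
    intro t ht
    exact hmain t ht
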